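/- Define the psychological best-response curve of the attacker (column player) by α'(β') = (F'₃β' + F'₄)/(F'₁β' + F'₂), where F'₁ = ω_s(π'_{1,2} + π'_{1,1} − π'_{2,1} − π'_{2,2}), F'₂ = ω_s(π'_{2,2} − π'_{1,2}), F'₃ = −(π_{1,2} + π_{2,1} − π_{1,1} − π_{2,2}) − ω_s(π'_{2,2} − π'_{1,2}), F'₄ = (π_{1,2} − π_{2,2}) + ω_s(π'_{2,2} − π'_{1,2}). Under the inequalities π_{1,2} > π_{2,2} ≥ π_{1,1}, π_{2,1} > π_{2,2} ≥ π_{1,1}, π'_{1,1} ≥ π'_{2,2} > π'_{1,2}, π'_{1,1} ≥ π'_{2,2} > π'_{2,1}, and ω_s ∈ (0,1], the quantity F'₂F'₃ − F'₁F'₄ satisfies F'₂F'₃ − F'₁F'₄ ≤ ω_s(π'_{2,2} − π'_{1,2})(π_{1,1} − π_{2,1}) < 0, so α'(β') is strictly decreasing on [0,1]. -/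
import Mathlib


/-- the attacker's psychological best-response curve is strictly
decreasing on [0,1], since F'₂F'₃ − F'₁F'₄ ≤ ω_s(π'₂₂−π'₁₂)(π₁₁−π₂₁) < 0. -/
theorem stmt_4 (π11 π12 π21 π22 π'11 π'12 π'21 π'22 ωs : ℝ)
    (h1 : π12 > π22) (h2 : π22 ≥ π11) (h3 : π21 > π22)
    (h4 : π'11 ≥ π'22) (h5 : π'22 > π'12) (h6 : π'22 > π'21)
    (hωs : ωs ∈ Set.Ioc (0 : ℝ) 1)
    (F'1 F'2 F'3 F'4 : ℝ)
    (hF1 : F'1 = ωs * (π'12 + π'11 - π'21 - π'22))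
    (hF2 : F'2 = ωs * (π'22 - π'12))
    (hF3 : F'3 = -(π12 + π21 - π11 - π22) - ωs * (π'22 - π'12))
    (hF4 : F'4 = (π12 - π22) + ωs * (π'22 - π'12))
    (hden : ∀ β' ∈ Set.Icc (0 : ℝ) 1, 0 < F'1 * β' + F'2) :
    (F'2 * F'3 - F'1 * F'4 ≤ ωs * (π'22 - π'12) * (π11 - π21) ∧
      ωs * (π'22 - π'12) * (π11 - π21) < 0) ∧
    StrictAntiOn (fun β' : ℝ => (F'3 * β' + F'4) / (F'1 * β' + F'2))
      (Set.Icc (0 : ℝ) 1) := by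
  obtain ⟨hω0, hω1⟩ := hωs
  have ha : 0 ≤ ωs * (π'11 - π'21) :=
    mul_nonneg hω0.le (by linarith)
  have hb : 0 ≤ π12 - π22 + ωs * (π'22 - π'12) := by
    have := mul_nonneg hω0.le (by linarith : (0:ℝ) ≤ π'22 - π'12)
    linarith
  have hle : F'2 * F'3 - F'1 * F'4 ≤ ωs * (π'22 - π'12) * (π11 - π21) := by
    subst hF1 hF2 hF3 hF4
    nlinarith [mul_nonneg ha hb]
  have hneg : ωs * (π'22 - π'12) * (π11 - π21) < 0 :=
    mul_neg_of_pos_of_neg (mul_pos hω0 (by linarith)) (by linarith)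
  have hD : F'2 * F'3 - F'1 * F'4 < 0 := lt_of_le_of_lt hle hneg
  refine ⟨⟨hle, hneg⟩, ?_⟩
  intro x hx y hy hxy
  simp only
  rw [div_lt_div_iff₀ (hden y hy) (hden x hx)]
  nlinarith [mul_neg_of_pos_of_neg (sub_pos.2 hxy) hD]
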